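/- Let P ⊆ ℝ^d be a full-dimensional lattice polytope with codegree a satisfying P = ⌊aP⌋ + {P}. If the floor polytope ⌊aP⌋ is a single point {u}, then aP − u is a reflexive polytope; in particular, P is Gorenstein. -/

import Mathlib

open Set Pointwise

/-- The set of lattice points of `ℝ^d`. -/
def latticePoints (d : ℕ) : Set (Fin d → ℝ) :=
  {x | ∀ i, ∃ z : ℤ, x i = (z : ℝ)}

/-- A lattice polytope: the convex hull of a finite set of lattice points. -/
def IsLatticePolytope {d : ℕ} (P : Set (Fin d → ℝ)) : Prop :=
  ∃ V : Finset (Fin d → ℝ), (V : Set (Fin d → ℝ)) ⊆ latticePoints d ∧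
    P = convexHull ℝ (V : Set (Fin d → ℝ))

/-- The natural pairing of an integral linear functional with a point of `ℝ^d`. -/
def pairing {d : ℕ} (n : Fin d → ℤ) (x : Fin d → ℝ) : ℝ :=
  ∑ i, (n i : ℝ) * x i


lemma pairing_add {d : ℕ} (n : Fin d → ℤ) (x y : Fin d → ℝ) :
    pairing n (x + y) = pairing n x + pairing n y := by
  simp [pairing, mul_add, Finset.sum_add_distrib]

lemma pairing_smul {d : ℕ} (n : Fin d → ℤ) (c : ℝ) (x : Fin d → ℝ) :
    pairing n (c • x) = c * pairing n x := by
  simp only [pairing, Finset.mul_sum, Pi.smul_apply, smul_eq_mul]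
  exact Finset.sum_congr rfl (fun i _ => by ring)

lemma pairing_sub {d : ℕ} (n : Fin d → ℤ) (x y : Fin d → ℝ) :
    pairing n (x - y) = pairing n x - pairing n y := by
  simp [pairing, mul_sub, Finset.sum_sub_distrib]

lemma pairing_isLinear {d : ℕ} (n : Fin d → ℤ) : IsLinearMap ℝ (pairing n) :=
  ⟨pairing_add n, fun c x => pairing_smul n c x⟩

/-- `P = {x | n_F(x) ≥ -h_F}` is an irredundant presentation with primitive
integral inner normals, i.e. the facet presentation of `P`. -/
def IsFacetPresentation {d m : ℕ} (P : Set (Fin d → ℝ))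
    (n : Fin m → Fin d → ℤ) (h : Fin m → ℤ) : Prop :=
  P = {x | ∀ i, pairing (n i) x ≥ -(h i : ℝ)} ∧
  (∀ i, Finset.univ.gcd (n i) = 1) ∧
  (∀ i, ∃ x : Fin d → ℝ, pairing (n i) x < -(h i : ℝ) ∧
    ∀ j, j ≠ i → pairing (n j) x ≥ -(h j : ℝ))

/-- `a` is the codegree of `P`: the least `k ≥ 1` such that `int(kP)` contains
a lattice point. -/
def IsCodegree {d : ℕ} (P : Set (Fin d → ℝ)) (a : ℕ) : Prop :=
  1 ≤ a ∧ (interior ((a : ℝ) • P) ∩ latticePoints d).Nonempty ∧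
    ∀ k : ℕ, 1 ≤ k → (interior ((k : ℝ) • P) ∩ latticePoints d).Nonempty → a ≤ k

/-- The floor polytope `⌊R⌋ = conv(int(R) ∩ ℤ^d)`. -/
def floorPoly {d : ℕ} (R : Set (Fin d → ℝ)) : Set (Fin d → ℝ) :=
  convexHull ℝ (interior R ∩ latticePoints d)

/-- The remainder polytope `{P} = conv{x ∈ ℤ^d | n_F(x) ≥ (a-1)h_F - 1}`,
defined in terms of the facet presentation data and the codegree `a`. -/
def remPoly {d m : ℕ} (n : Fin m → Fin d → ℤ) (h : Fin m → ℤ) (a : ℕ) :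
    Set (Fin d → ℝ) :=
  convexHull ℝ {x | x ∈ latticePoints d ∧
    ∀ i, pairing (n i) x ≥ ((a : ℝ) - 1) * (h i : ℝ) - 1}

/-- The cone `C_P ⊆ ℝ^d × ℝ` over `P`, in terms of the facet presentation. -/
def coneOver {d m : ℕ} (n : Fin m → Fin d → ℤ) (h : Fin m → ℤ) :
    Set ((Fin d → ℝ) × ℝ) :=
  {p | ∀ i, pairing (n i) p.1 ≥ -(p.2 * (h i : ℝ))}

/-- The interior `int(C_P)` of the cone over `P`. -/
def intCone {d m : ℕ} (n : Fin m → Fin d → ℤ) (h : Fin m → ℤ) :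
    Set ((Fin d → ℝ) × ℝ) :=
  {p | ∀ i, pairing (n i) p.1 > -(p.2 * (h i : ℝ))}

/-- The anticanonical set `ant(C_P)` of the cone over `P`. -/
def antCone {d m : ℕ} (n : Fin m → Fin d → ℤ) (h : Fin m → ℤ) :
    Set ((Fin d → ℝ) × ℝ) :=
  {p | ∀ i, pairing (n i) p.1 ≥ -(p.2 * (h i : ℝ)) - 1}

/-- Lattice points of `ℝ^d × ℝ = ℝ^{d+1}`. -/
def latticePairs (d : ℕ) : Set ((Fin d → ℝ) × ℝ) :=
  {p | p.1 ∈ latticePoints d ∧ ∃ z : ℤ, p.2 = (z : ℝ)}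

/-- The nearly Gorenstein condition with respect to a given facet presentation:
`(C_P ∩ ℤ^{d+1}) \ {0} ⊆ (int(C_P) ∩ ℤ^{d+1}) + (ant(C_P) ∩ ℤ^{d+1})`. -/
def NGIncl {d m : ℕ} (n : Fin m → Fin d → ℤ) (h : Fin m → ℤ) : Prop :=
  (coneOver n h ∩ latticePairs d) \ {(0 : (Fin d → ℝ) × ℝ)} ⊆
    (intCone n h ∩ latticePairs d) + (antCone n h ∩ latticePairs d)

/-- A full-dimensional lattice polytope is nearly Gorenstein if the nearly
Gorenstein inclusion holds for its facet presentation. -/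
def NearlyGorenstein {d : ℕ} (P : Set (Fin d → ℝ)) : Prop :=
  ∃ (m : ℕ) (n : Fin m → Fin d → ℤ) (h : Fin m → ℤ),
    IsFacetPresentation P n h ∧ NGIncl n h

/-- The polar dual `Q* = {y | y(x) ≥ -1 for all x ∈ Q}`. -/
def polarDual {d : ℕ} (Q : Set (Fin d → ℝ)) : Set (Fin d → ℝ) :=
  {y | ∀ x ∈ Q, (∑ i, y i * x i) ≥ -1}

/-- A reflexive polytope: a lattice polytope with `0` in its interior whose
polar dual is again a lattice polytope. -/
def IsReflexive {d : ℕ} (Q : Set (Fin d → ℝ)) : Prop :=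
  IsLatticePolytope Q ∧ (0 : Fin d → ℝ) ∈ interior Q ∧
    IsLatticePolytope (polarDual Q)

/-- A Gorenstein polytope: some dilate `kP`, translated by a lattice vector,
is reflexive. -/
def IsGorenstein {d : ℕ} (P : Set (Fin d → ℝ)) : Prop :=
  ∃ (k : ℕ) (w : Fin d → ℝ), 1 ≤ k ∧ w ∈ latticePoints d ∧
    IsReflexive ((fun x => x - w) '' ((k : ℝ) • P))

/-- The integer decomposition property. -/
def IsIDP {d : ℕ} (P : Set (Fin d → ℝ)) : Prop :=
  ∀ k : ℕ, 1 ≤ k → ∀ x ∈ ((k : ℝ) • P) ∩ latticePoints d,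
    ∃ y : Fin k → Fin d → ℝ, (∀ j, y j ∈ P ∩ latticePoints d) ∧ x = ∑ j, y j

/-- Minkowski indecomposability of a lattice polytope. -/
def IsIndecomposable {d : ℕ} (P : Set (Fin d → ℝ)) : Prop :=
  (¬ ∃ p : Fin d → ℝ, P = {p}) ∧
  ∀ P₁ P₂ : Set (Fin d → ℝ), IsLatticePolytope P₁ → IsLatticePolytope P₂ →
    P = P₁ + P₂ → (∃ p, P₁ = {p}) ∨ (∃ p, P₂ = {p})

/-- A `(0,1)`-polytope: the convex hull of a set of `(0,1)`-vectors. -/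
def Is01Polytope {d : ℕ} (P : Set (Fin d → ℝ)) : Prop :=
  ∃ V : Finset (Fin d → ℝ), (∀ v ∈ V, ∀ i, v i = 0 ∨ v i = 1) ∧
    P = convexHull ℝ (V : Set (Fin d → ℝ))

theorem stmt_15 {d : ℕ} (hd : 1 ≤ d) (P : Set (Fin d → ℝ))
    (hP : IsLatticePolytope P) (hfull : (interior P).Nonempty)
    {m : ℕ} (n : Fin m → Fin d → ℤ) (h : Fin m → ℤ)
    (hpres : IsFacetPresentation P n h)
    (a : ℕ) (ha : IsCodegree P a)
    (hdecomp : P = floorPoly ((a : ℝ) • P) + remPoly n h a)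
    (u : Fin d → ℝ) (hu : floorPoly ((a : ℝ) • P) = {u}) :
    IsReflexive ((fun x => x - u) '' ((a : ℝ) • P)) ∧ IsGorenstein P := by
  obtain ⟨hPeq, hprim, hirr⟩ := hpres
  obtain ⟨ha1, hane, _⟩ := ha
  have haR : (0:ℝ) < (a:ℝ) := by exact_mod_cast ha1
  -- u is the interior lattice point of aP
  have huin : u ∈ interior ((a : ℝ) • P) ∩ latticePoints d := by
    obtain ⟨w, hw⟩ := hane
    have hwu : w ∈ floorPoly ((a : ℝ) • P) :=
      subset_convexHull ℝ _ hw
    rw [hu, Set.mem_singleton_iff] at hwu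
    rwa [hwu] at hw
  have huint : u ∈ interior ((a : ℝ) • P) := huin.1
  obtain ⟨zu, hzu⟩ : ∃ zu : Fin d → ℤ, ∀ i, u i = (zu i : ℝ) := by
    choose zu hzu using huin.2
    exact ⟨zu, hzu⟩
  -- halfspace description of aP
  have haP : (a : ℝ) • P = {x | ∀ i, pairing (n i) x ≥ -((a:ℝ) * (h i : ℝ))} := by
    ext x
    constructor
    · rintro ⟨p, hp, rfl⟩ i
      have hpi : pairing (n i) p ≥ -(h i : ℝ) := by
        rw [hPeq] at hp; exact hp i
      rw [pairing_smul]
      nlinarith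
    · intro hx
      refine ⟨(a:ℝ)⁻¹ • x, ?_, ?_⟩
      · rw [hPeq]
        intro i
        rw [pairing_smul]
        have hxi := hx i
        rw [ge_iff_le, le_inv_mul_iff₀ haR]
        linarith
      · show (a:ℝ) • ((a:ℝ)⁻¹ • x) = x
        rw [smul_smul, mul_inv_cancel₀ (ne_of_gt haR), one_smul]
  -- u lies strictly inside every facet inequality of aP
  have hustrict : ∀ i, pairing (n i) u > -((a:ℝ) * (h i : ℝ)) := by
    intro i
    have humem : u ∈ (a : ℝ) • P := interior_subset huint
    rw [haP] at humem
    rcases lt_or_eq_of_le (humem i) with hlt | heq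
    · exact hlt
    · exfalso
      obtain ⟨j, hj⟩ : ∃ j, n i j ≠ 0 := by
        by_contra hall
        push_neg at hall
        have : Finset.univ.gcd (n i) = 0 :=
          Finset.gcd_eq_zero_iff.mpr (fun j _ => hall j)
        rw [hprim i] at this
        exact one_ne_zero this
      set w : Fin d → ℝ := fun j => (n i j : ℝ) with hw
      have hwpos : (0:ℝ) < pairing (n i) w := by
        apply Finset.sum_pos' (fun k _ => mul_self_nonneg _)
        exact ⟨j, Finset.mem_univ j, by
          have hne : ((n i j : ℝ)) ≠ 0 := Int.cast_ne_zero.mpr hj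
          simpa [hw] using mul_self_pos.mpr hne⟩
      obtain ⟨ε, hε, hball⟩ := Metric.isOpen_iff.mp isOpen_interior u huint
      set δ : ℝ := ε / (2 * (‖w‖ + 1)) with hδ
      have hδpos : 0 < δ := by positivity
      have hmem2 : u - δ • w ∈ (a : ℝ) • P := by
        apply interior_subset
        apply hball
        rw [Metric.mem_ball, dist_eq_norm]
        have : u - δ • w - u = -(δ • w) := by abel
        rw [this, norm_neg, norm_smul, Real.norm_of_nonneg hδpos.le]
        have hn : (0:ℝ) ≤ ‖w‖ := norm_nonneg _
        rw [hδ]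
        rw [div_mul_eq_mul_div, div_lt_iff₀ (by positivity)]
        nlinarith
      rw [haP] at hmem2
      have := hmem2 i
      rw [pairing_sub, pairing_smul] at this
      nlinarith
  -- every facet of P contains a point of P
  have hfacet : ∀ i, ∃ p ∈ P, pairing (n i) p = -(h i : ℝ) := by
    intro i
    obtain ⟨x, hx1, hx2⟩ := hirr i
    obtain ⟨q, hq⟩ := hfull
    have hqP : q ∈ P := interior_subset hq
    have hq' : ∀ j, pairing (n j) q ≥ -(h j : ℝ) := by rw [hPeq] at hqP; exact hqP
    set g0 := pairing (n i) q with hg0def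
    set g1 := pairing (n i) x with hg1def
    have hg0 : g0 ≥ -(h i : ℝ) := hq' i
    have hden : 0 < g0 - g1 := by linarith
    set t : ℝ := (g0 + (h i : ℝ)) / (g0 - g1) with ht
    have ht0 : 0 ≤ t := div_nonneg (by linarith) hden.le
    have ht1 : t ≤ 1 := (div_le_one hden).mpr (by linarith)
    have htden : t * (g0 - g1) = g0 + (h i : ℝ) := by
      rw [ht]; field_simp
    refine ⟨(1 - t) • q + t • x, ?_, ?_⟩
    · rw [hPeq]
      intro j
      rw [pairing_add, pairing_smul, pairing_smul]
      by_cases hji : j = i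
      · subst hji
        rw [← hg0def, ← hg1def]
        nlinarith [htden]
      · have h1 := hq' j
        have h2 := hx2 j hji
        nlinarith [mul_le_mul_of_nonneg_left h1 (by linarith : (0:ℝ) ≤ 1 - t),
          mul_le_mul_of_nonneg_left h2 ht0]
    · rw [pairing_add, pairing_smul, pairing_smul, ← hg0def, ← hg1def]
      nlinarith [htden]
  -- the key lattice-distance-one identity
  have hc : ∀ i, pairing (n i) u = 1 - (a:ℝ) * (h i : ℝ) := by
    intro i
    have hz : pairing (n i) u + (a:ℝ) * (h i : ℝ)
        = ((∑ j, n i j * zu j + (a:ℤ) * h i : ℤ) : ℝ) := by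
      push_cast
      simp only [pairing, hzu]
    set z : ℤ := ∑ j, n i j * zu j + (a:ℤ) * h i with hzdef
    have h1 : (0:ℝ) < (z:ℝ) := by
      rw [← hz]
      have := hustrict i
      linarith
    -- upper bound from the decomposition hypothesis
    obtain ⟨p, hpP, hpe⟩ := hfacet i
    rw [hdecomp, hu] at hpP
    obtain ⟨u', hu', r, hr, hur⟩ := hpP
    rw [Set.mem_singleton_iff] at hu'
    have hur' : u + r = p := by rw [← hu']; exact hur
    have hrge : pairing (n i) r ≥ ((a:ℝ) - 1) * (h i : ℝ) - 1 := by
      have hsub : remPoly n h a ⊆ {x : Fin d → ℝ |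
          pairing (n i) x ≥ ((a:ℝ) - 1) * (h i : ℝ) - 1} :=
        convexHull_min (fun x hx => hx.2 i)
          (convex_halfSpace_ge (pairing_isLinear (n i)) _)
      exact hsub hr
    have hup : pairing (n i) u + pairing (n i) r = -(h i : ℝ) := by
      rw [← pairing_add, hur', hpe]
    have h2 : (z:ℝ) ≤ 1 := by rw [← hz]; linarith
    have h1' : (0:ℤ) < z := by exact_mod_cast h1
    have h2' : z ≤ 1 := by exact_mod_cast h2
    have hz1 : z = 1 := by omega
    rw [hz1] at hz
    push_cast at hz
    linarith
  set Q := (fun x => x - u) '' ((a : ℝ) • P) with hQdef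
  -- halfspace description of Q
  have hQ : Q = {z | ∀ i, pairing (n i) z ≥ -1} := by
    ext z
    simp only [hQdef, Set.mem_image, Set.mem_setOf_eq]
    constructor
    · rintro ⟨x, hx, rfl⟩ i
      rw [haP] at hx
      have := hx i
      rw [pairing_sub]
      have := hc i
      linarith [hx i]
    · intro hz
      refine ⟨z + u, ?_, by abel⟩
      rw [haP]
      intro i
      rw [pairing_add]
      have := hc i
      linarith [hz i]
  -- Q is a lattice polytope
  have hQlat : IsLatticePolytope Q := by
    obtain ⟨V, hVlat, hVP⟩ := hP
    refine ⟨V.image (fun v => (a:ℝ) • v - u), ?_, ?_⟩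
    · intro x hx
      rw [Finset.coe_image] at hx
      obtain ⟨v, hv, rfl⟩ := hx
      intro j
      obtain ⟨zv, hzv⟩ := hVlat hv j
      refine ⟨(a:ℤ) * zv - zu j, ?_⟩
      show ((a:ℝ) • v - u) j = _
      simp only [Pi.sub_apply, Pi.smul_apply, smul_eq_mul, hzv, hzu j]
      push_cast; ring
    · have hF : ∃ F : (Fin d → ℝ) →ᵃ[ℝ] (Fin d → ℝ), ⇑F = fun x => x - u := by
        refine ⟨AffineMap.mk' (fun x => x - u) (LinearMap.id) 0 (fun p => by simp [sub_eq_add_neg]), ?_⟩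
        rw [AffineMap.coe_mk']
      obtain ⟨F, hFco⟩ := hF
      rw [hQdef, hVP, ← convexHull_smul, ← hFco, AffineMap.image_convexHull, hFco,
        Finset.coe_image]
      congr 1
      rw [← Set.image_smul, Set.image_image]
  -- 0 is interior to Q
  have hQ0 : (0 : Fin d → ℝ) ∈ interior Q := by
    have hco : ⇑(Homeomorph.subRight u : (Fin d → ℝ) ≃ₜ (Fin d → ℝ)) = fun x => x - u := by
      funext x; simp
    have : Q = (Homeomorph.subRight u) '' ((a : ℝ) • P) := by rw [hco, hQdef]
    rw [this, ← Homeomorph.image_interior]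
    exact ⟨u, huint, by simp⟩
  -- polar dual of Q is a lattice polytope
  set W : Finset (Fin d → ℝ) :=
    insert 0 (Finset.univ.image (fun i => fun j => ((n i j : ℤ) : ℝ))) with hW
  have hWQ : (W : Set (Fin d → ℝ)) ⊆ polarDual Q := by
    intro y hy
    rw [hW, Finset.coe_insert, Set.mem_insert_iff] at hy
    rcases hy with rfl | hy
    · intro x _
      simp
    · rw [Finset.coe_image, Set.mem_image] at hy
      obtain ⟨i, _, rfl⟩ := hy
      intro x hx
      rw [hQ] at hx
      exact hx i
  have hKclosed : IsClosed (convexHull ℝ (W : Set (Fin d → ℝ))) :=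
    (W.finite_toSet.isCompact_convexHull (𝕜 := ℝ)).isClosed
  have hdual : polarDual Q = convexHull ℝ (W : Set (Fin d → ℝ)) := by
    apply Set.Subset.antisymm
    · intro y hy
      by_contra hyK
      obtain ⟨f, c, hfK, hfy⟩ :=
        geometric_hahn_banach_closed_point (convex_convexHull ℝ _) hKclosed hyK
      have h0K : (0 : Fin d → ℝ) ∈ convexHull ℝ (W : Set (Fin d → ℝ)) :=
        subset_convexHull ℝ _ (by rw [hW, Finset.coe_insert]; exact Set.mem_insert _ _)
      have hc0 : 0 < c := by
        have := hfK 0 h0K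
        simpa using this
      have hfz : ∀ v : Fin d → ℝ, f v = ∑ j, v j * f (fun k => if j = k then 1 else 0) := by
        intro v
        have := LinearMap.pi_apply_eq_sum_univ (f : (Fin d → ℝ) →ₗ[ℝ] ℝ) v
        simpa [smul_eq_mul] using this
      set zpt : Fin d → ℝ := fun j => -(1/c) * f (fun k => if j = k then 1 else 0) with hzpt
      have hpz : ∀ nn : Fin d → ℤ,
          pairing nn zpt = -(1/c) * f (fun j => (nn j : ℝ)) := by
        intro nn
        rw [hfz (fun j => ((nn j : ℝ)))]
        rw [pairing, Finset.mul_sum]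
        exact Finset.sum_congr rfl (fun j _ => by rw [hzpt]; ring)
      have hzQ : zpt ∈ Q := by
        rw [hQ]
        intro i
        rw [hpz (n i)]
        have h2 : f (fun j => ((n i j : ℤ) : ℝ)) < c := by
          apply hfK
          apply subset_convexHull ℝ _
          rw [hW, Finset.coe_insert]
          right
          rw [Finset.coe_image]
          exact ⟨i, by simp, rfl⟩
        have h1c : 0 < 1/c := by positivity
        have hcc : (1/c) * c = 1 := one_div_mul_cancel (ne_of_gt hc0)
        nlinarith [mul_lt_mul_of_pos_left h2 h1c]
      have hcontr : ∑ i, y i * zpt i ≥ -1 := hy zpt hzQ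
      have heq : ∑ i, y i * zpt i = -(1/c) * f y := by
        rw [hfz y, Finset.mul_sum]
        exact Finset.sum_congr rfl (fun j _ => by rw [hzpt]; ring)
      rw [heq] at hcontr
      have h1c : 0 < 1/c := by positivity
      have hcc : (1/c) * c = 1 := one_div_mul_cancel (ne_of_gt hc0)
      nlinarith [mul_lt_mul_of_pos_left hfy h1c]
    · apply convexHull_min hWQ
      intro y1 hy1 y2 hy2 α β hα hβ hαβ
      intro x hx
      have e1 := hy1 x hx
      have e2 := hy2 x hx
      have : ∑ i, (α • y1 + β • y2) i * x i
          = α * (∑ i, y1 i * x i) + β * (∑ i, y2 i * x i) := by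
        rw [Finset.mul_sum, Finset.mul_sum, ← Finset.sum_add_distrib]
        exact Finset.sum_congr rfl (fun i _ => by
          simp only [Pi.add_apply, Pi.smul_apply, smul_eq_mul]; ring)
      rw [this]
      nlinarith
  have hduallat : IsLatticePolytope (polarDual Q) := by
    refine ⟨W, ?_, hdual⟩
    intro x hx
    rw [hW, Finset.coe_insert, Set.mem_insert_iff] at hx
    rcases hx with rfl | hx
    · exact fun j => ⟨0, by simp⟩
    · rw [Finset.coe_image, Set.mem_image] at hx
      obtain ⟨i, _, rfl⟩ := hx
      exact fun j => ⟨n i j, rfl⟩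
  have hrefl : IsReflexive Q := ⟨hQlat, hQ0, hduallat⟩
  exact ⟨hrefl, ⟨a, u, ha1, huin.2, hrefl⟩⟩
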